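/- Let m, t be positive integers and δ > 0, and let H be a 3-graph on n vertices. Suppose F is a subgraph of the shadow ∂H, and for each edge f of F let S_f be a set of m vertices of H disjoint from f. If |F| ≥ δ·n² and n is sufficiently large (depending on m, t, δ), then there exists a subgraph K of F isomorphic to K_{t,t} such that S_f ∩ V(K) = ∅ for every edge f of K. -/

import Mathlib

open Finset

/-- Slot bound: tuples whose value at slot `k` lies in a small set determined by
the other coordinates are few. -/
lemma slot_bound {ι V : Type*} [Fintype ι] [Fintype V] [DecidableEq ι] [DecidableEq V]
    [Nonempty V] (k : ι) (B : (ι → V) → Finset V) (s : ℕ)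
    [DecidablePred fun g : ι → V => g k ∈ B g]
    (hB : ∀ g g' : ι → V, (∀ j, j ≠ k → g j = g' j) → B g = B g')
    (hs : ∀ g, (B g).card ≤ s) :
    (univ.filter fun g : ι → V => g k ∈ B g).card
      ≤ s * (Fintype.card V) ^ (Fintype.card ι - 1) := by
  classical
  obtain ⟨d⟩ := ‹Nonempty V›
  set T : Finset (ι → V) := univ.filter fun h => h k = d with hT
  have hTcard : T.card = (Fintype.card V) ^ (Fintype.card ι - 1) := by
    have : T = Fintype.piFinset fun j => if j = k then {d} else univ := by
      ext h
      simp only [hT, mem_filter, mem_univ, true_and, Fintype.mem_piFinset]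
      constructor
      · intro hh j
        by_cases hj : j = k <;> simp [hj, hh]
      · intro hh
        have := hh k
        simpa using this
    rw [this, Fintype.card_piFinset]
    rw [← Finset.prod_erase_mul _ _ (Finset.mem_univ k)]
    have : ∀ j ∈ (univ : Finset ι).erase k,
        (if j = k then ({d} : Finset V) else univ).card = Fintype.card V := by
      intro j hj
      rw [if_neg (Finset.ne_of_mem_erase hj)]
      simp
    rw [Finset.prod_congr rfl this, Finset.prod_const, Finset.card_erase_of_mem (mem_univ k),
      Finset.card_univ]
    simp
  have key : (univ.filter fun g : ι → V => g k ∈ B g).card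
      = ∑ h ∈ T, ((univ.filter fun g : ι → V => g k ∈ B g).filter
          fun g => Function.update g k d = h).card := by
    apply Finset.card_eq_sum_card_fiberwise
    intro g _
    simp [hT, Function.update_self]
  rw [key]
  calc ∑ h ∈ T, ((univ.filter fun g : ι → V => g k ∈ B g).filter
          fun g => Function.update g k d = h).card
      ≤ ∑ _h ∈ T, s := by
        apply Finset.sum_le_sum
        intro h _
        apply le_trans (Finset.card_le_card_of_injOn (fun g => g k) ?_ ?_) (hs h)
        · intro g hg
          simp only [mem_coe, mem_filter, mem_univ, true_and] at hg
          obtain ⟨hgk, hgh⟩ := hg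
          have hBeq : B g = B h := by
            apply hB
            intro j hj
            rw [← hgh, Function.update_of_ne hj]
          rwa [← hBeq]
        · intro g₁ hg₁ g₂ hg₂ hval
          simp only [coe_filter, Set.mem_setOf_eq, mem_univ, true_and] at hg₁ hg₂
          funext j
          by_cases hj : j = k
          · subst hj; exact hval
          · have := congrFun (hg₁.2.trans hg₂.2.symm) j
            rwa [Function.update_of_ne hj, Function.update_of_ne hj] at this
    _ = T.card * s := by rw [Finset.sum_const, smul_eq_mul]
    _ = s * (Fintype.card V) ^ (Fintype.card ι - 1) := by rw [hTcard, mul_comm]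

/-- Double counting: sum of degrees equals twice the number of edges. -/
lemma sum_degrees {V : Type*} [Fintype V] [DecidableEq V] (F : Finset (Finset V))
    (hF : ∀ f ∈ F, f.card = 2) :
    ∑ v : V, (univ.filter fun u => ({v, u} : Finset V) ∈ F).card = 2 * F.card := by
  classical
  set D : Finset (V × V) := univ.filter fun p => ({p.1, p.2} : Finset V) ∈ F with hD
  have h1 : ∑ v : V, (univ.filter fun u => ({v, u} : Finset V) ∈ F).card = D.card := by
    rw [Finset.card_eq_sum_card_fiberwise (f := Prod.fst) (t := univ) (fun p _ => mem_univ _)]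
    apply Finset.sum_congr rfl
    intro v _
    apply Finset.card_nbij' (fun u => (v, u)) (fun p => p.2)
    · intro u hu
      simp only [mem_coe, mem_filter, mem_univ, true_and] at hu
      simp [hD, hu]
    · intro p hp
      simp only [mem_coe, hD, mem_filter, mem_univ, true_and] at hp ⊢
      rw [← hp.2]; exact hp.1
    · intro u _; rfl
    · intro p hp
      simp only [mem_coe, hD, mem_filter, mem_univ, true_and] at hp
      ext <;> simp [hp.2.symm]
  have h2 : D.card = 2 * F.card := by
    rw [Finset.card_eq_sum_card_fiberwise (f := fun p => ({p.1, p.2} : Finset V)) (t := F)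
      (by intro p hp; simp only [mem_coe, hD, mem_filter] at hp; exact hp.2)]
    rw [Finset.sum_congr rfl (fun f hf => ?_), Finset.sum_const, smul_eq_mul, mul_comm]
    obtain ⟨a, b, hab, rfl⟩ := Finset.card_eq_two.mp (hF f hf)
    have : (D.filter fun p => ({p.1, p.2} : Finset V) = {a, b}) = {(a, b), (b, a)} := by
      ext p
      simp only [hD, mem_filter, mem_univ, true_and, mem_insert, mem_singleton]
      constructor
      · rintro ⟨-, hp⟩
        have ha : a ∈ ({p.1, p.2} : Finset V) := by rw [hp]; simp
        have hb : b ∈ ({p.1, p.2} : Finset V) := by rw [hp]; simp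
        have hp1 : p.1 ∈ ({a, b} : Finset V) := by rw [← hp]; simp
        have hp2 : p.2 ∈ ({a, b} : Finset V) := by rw [← hp]; simp
        simp only [mem_insert, mem_singleton] at ha hb hp1 hp2
        rcases hp1 with h1 | h1 <;> rcases hp2 with h2 | h2
        · exfalso; rcases hb with h | h <;> [exact hab (h.trans h1).symm; exact hab (h.trans h2).symm]
        · left; exact Prod.ext h1 h2
        · right; exact Prod.ext h1 h2
        · exfalso; rcases ha with h | h <;> [exact hab (h.trans h1); exact hab (h.trans h2)]
      · rintro (rfl | rfl)
        · exact ⟨hf, rfl⟩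
        · refine ⟨?_, Finset.pair_comm _ _⟩
          rw [Finset.pair_comm]; exact hf
    rw [this]
    rw [Finset.card_insert_of_notMem (by simp [Prod.ext_iff]; rintro rfl; simp at hab),
      Finset.card_singleton]
  rw [h1, h2]

lemma powermean {ι : Type*} [Fintype ι] (f : ι → ℝ) (hf : ∀ i, 0 ≤ f i) {t : ℕ} (ht : 0 < t) :
    (∑ i, f i) ^ t ≤ (Fintype.card ι : ℝ) ^ (t - 1) * ∑ i, f i ^ t := by
  obtain ⟨u, rfl⟩ : ∃ u, t = u + 1 := ⟨t - 1, by omega⟩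
  have := pow_sum_le_card_mul_sum_pow (s := (univ : Finset ι)) (f := f)
    (fun i _ => hf i) u
  simpa using this

/-- A triple system (3-graph): every edge has exactly 3 vertices. -/
def IsTripleSystem {V : Type*} (H : Finset (Finset V)) : Prop :=
  ∀ e ∈ H, e.card = 3

/-- The shadow `∂H` of a triple system: all 2-element subsets of edges of `H`. -/
def shadowGraph {V : Type*} [DecidableEq V] (H : Finset (Finset V)) : Finset (Finset V) :=
  H.sup fun e => e.powersetCard 2

/-- Let `H` be a triple system on `n` vertices, `F ⊆ ∂H` a graph, and for each edge
`f ∈ F` let `S f` be a set of `m` vertices disjoint from `f`. If `|F| ≥ δn²` and `n`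
is large (depending on `m`, `t`, `δ`), then `F` contains a copy `K` of `K_{t,t}`
(with parts `X`, `Y`) such that `S f ∩ V(K) = ∅` for every edge `f` of `K`. -/
theorem clean_Ktt_in_dense_shadow (m t : ℕ) (hm : 0 < m) (ht : 0 < t)
    (δ : ℝ) (hδ : 0 < δ) :
    ∃ n₀ : ℕ, ∀ n ≥ n₀, ∀ H : Finset (Finset (Fin n)), IsTripleSystem H →
      ∀ F : Finset (Finset (Fin n)), F ⊆ shadowGraph H →
      ∀ S : Finset (Fin n) → Finset (Fin n),
        (∀ f ∈ F, (S f).card = m ∧ Disjoint (S f) f) →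
        δ * (n : ℝ) ^ 2 ≤ (F.card : ℝ) →
        ∃ X Y : Finset (Fin n), Disjoint X Y ∧ X.card = t ∧ Y.card = t ∧
          ∀ x ∈ X, ∀ y ∈ Y, ({x, y} : Finset (Fin n)) ∈ F ∧
            Disjoint (S {x, y}) (X ∪ Y) := by
  classical
  set c : ℝ := (2 * δ) ^ (t * t) with hc
  have hcpos : 0 < c := by positivity
  set K : ℕ := (t + t) * (t + t) + t * t * (t + t) * m with hK
  refine ⟨max 1 (Nat.ceil ((K : ℝ) / c) + 1), fun n hn H hH F hFsub S hS hdense => ?_⟩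
  have hn1 : 1 ≤ n := le_trans (le_max_left _ _) hn
  have hnR : (0:ℝ) < n := by exact_mod_cast hn1
  haveI : Nonempty (Fin n) := ⟨⟨0, by omega⟩⟩
  have hKc : (K : ℝ) < c * n := by
    have h1 : ((K : ℝ) / c) < n := by
      have : (Nat.ceil ((K : ℝ) / c) + 1 : ℕ) ≤ n := le_trans (le_max_right _ _) hn
      calc ((K : ℝ) / c) ≤ Nat.ceil ((K : ℝ) / c) := Nat.le_ceil _
        _ < n := by exact_mod_cast this
    calc (K : ℝ) = ((K : ℝ) / c) * c := by field_simp
      _ < n * c := by exact mul_lt_mul_of_pos_right h1 hcpos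
      _ = c * n := mul_comm _ _
  -- every edge of F has two vertices
  have hF2 : ∀ f ∈ F, f.card = 2 := by
    intro f hf
    obtain ⟨e, _, hfe⟩ := Finset.mem_sup.mp (hFsub hf)
    exact (Finset.mem_powersetCard.mp hfe).2
  -- neighbourhoods
  set N : Fin n → Finset (Fin n) :=
    fun a => univ.filter fun u => ({a, u} : Finset (Fin n)) ∈ F with hN
  set Cy : (Fin t → Fin n) → Finset (Fin n) :=
    fun y => univ.filter fun v => ∀ j, y j ∈ N v with hCy
  set AllE : Finset ((Fin t ⊕ Fin t) → Fin n) :=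
    univ.filter fun g => ∀ i j, g (Sum.inr j) ∈ N (g (Sum.inl i)) with hAllE
  have stepA : AllE.card = ∑ y : Fin t → Fin n, (Cy y).card ^ t := by
    rw [Finset.card_eq_sum_card_fiberwise (f := fun g => g ∘ Sum.inr)
      (t := (univ : Finset (Fin t → Fin n))) (fun g _ => mem_univ _)]
    apply Finset.sum_congr rfl
    intro y _
    have hbij : (AllE.filter fun g => g ∘ Sum.inr = y).card
        = (Fintype.piFinset fun _ : Fin t => Cy y).card := by
      apply Finset.card_nbij' (fun g => g ∘ Sum.inl) (fun x => Sum.elim x y)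
      · intro g hg
        simp only [mem_coe, hAllE, mem_filter, mem_univ, true_and] at hg
        rw [Finset.mem_coe, Fintype.mem_piFinset]
        intro i
        simp only [hCy, mem_filter, mem_univ, true_and]
        intro j
        have := hg.1 i j
        rw [show y j = g (Sum.inr j) from (congrFun hg.2 j).symm]
        exact this
      · intro x hx
        rw [Finset.mem_coe, Fintype.mem_piFinset] at hx
        simp only [mem_coe, hAllE, mem_filter, mem_univ, true_and]
        constructor
        · intro i j
          have := hx i
          simp only [hCy, mem_filter, mem_univ, true_and] at this
          exact this j
        · rfl
      · intro g hg
        simp only [mem_coe, mem_filter] at hg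
        funext k
        cases k with
        | inl i => rfl
        | inr j => exact (congrFun hg.2 j).symm
      · intro x _
        rfl
    rw [hbij, Fintype.card_piFinset]
    simp
  have stepB : ∑ y : Fin t → Fin n, (Cy y).card = ∑ v : Fin n, (N v).card ^ t := by
    have : ∀ y : Fin t → Fin n, (Cy y).card = ∑ v : Fin n, if (∀ j, y j ∈ N v) then 1 else 0 := by
      intro y
      rw [hCy, Finset.card_filter]
    rw [Finset.sum_congr rfl (fun y _ => this y), Finset.sum_comm]
    apply Finset.sum_congr rfl
    intro v _
    rw [← Finset.card_filter]
    have : (univ.filter fun y : Fin t → Fin n => ∀ j, y j ∈ N v)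
        = Fintype.piFinset fun _ : Fin t => N v := by
      ext y
      simp [Fintype.mem_piFinset]
    rw [this, Fintype.card_piFinset]
    simp
  have stepC : ∑ v : Fin n, (N v).card = 2 * F.card :=
    sum_degrees F hF2
  -- lower bound on AllE
  have hA : c * (n:ℝ) ^ (2 * t) ≤ (AllE.card : ℝ) := by
    have hdeg : 2 * δ * (n:ℝ)^2 ≤ ∑ v : Fin n, ((N v).card : ℝ) := by
      have : (∑ v : Fin n, ((N v).card : ℝ)) = 2 * (F.card : ℝ) := by
        rw [← Nat.cast_sum, stepC]
        push_cast
        ring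
      rw [this]
      nlinarith [hdense]
    have hdegnn : (0:ℝ) ≤ 2 * δ * (n:ℝ)^2 := by positivity
    have h1 : (2*δ)^t * (n:ℝ)^(t+1) ≤ ∑ v : Fin n, ((N v).card:ℝ)^t := by
      have hpm := powermean (fun v : Fin n => ((N v).card:ℝ)) (fun v => by positivity) ht
      simp only [Fintype.card_fin] at hpm
      have hL : (2*δ*(n:ℝ)^2)^t ≤ (∑ v : Fin n, ((N v).card:ℝ))^t :=
        pow_le_pow_left₀ hdegnn hdeg t
      have key : (2*δ)^t * (n:ℝ)^(t+1) * (n:ℝ)^(t-1)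
          ≤ (∑ v : Fin n, ((N v).card:ℝ)^t) * (n:ℝ)^(t-1) := by
        have e1 : (2*δ*(n:ℝ)^2)^t = (2*δ)^t * (n:ℝ)^(t+1) * (n:ℝ)^(t-1) := by
          rw [mul_pow, ← pow_mul, mul_assoc, ← pow_add]
          congr 2
          omega
        calc (2*δ)^t * (n:ℝ)^(t+1) * (n:ℝ)^(t-1) = (2*δ*(n:ℝ)^2)^t := e1.symm
          _ ≤ (∑ v : Fin n, ((N v).card:ℝ))^t := hL
          _ ≤ (n:ℝ)^(t-1) * ∑ v : Fin n, ((N v).card:ℝ)^t := hpm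
          _ = (∑ v : Fin n, ((N v).card:ℝ)^t) * (n:ℝ)^(t-1) := mul_comm _ _
      exact le_of_mul_le_mul_right key (by positivity)
    have h2 : (2*δ)^t * (n:ℝ)^(t+1) ≤ ∑ y : Fin t → Fin n, ((Cy y).card:ℝ) := by
      have : (∑ y : Fin t → Fin n, ((Cy y).card:ℝ)) = ∑ v : Fin n, ((N v).card:ℝ)^t := by
        rw [← Nat.cast_sum, stepB]
        push_cast
        rfl
      rw [this]
      exact h1
    have h2nn : (0:ℝ) ≤ (2*δ)^t * (n:ℝ)^(t+1) := by positivity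
    have hpm2 := powermean (fun y : Fin t → Fin n => ((Cy y).card:ℝ)) (fun y => by positivity) ht
    have hcard2 : (Fintype.card (Fin t → Fin n) : ℝ) = (n:ℝ)^t := by
      simp [Fintype.card_fun]
    rw [hcard2] at hpm2
    have hR : (∑ y : Fin t → Fin n, ((Cy y).card:ℝ)^t) = (AllE.card : ℝ) := by
      rw [stepA]
      push_cast
      rfl
    rw [hR] at hpm2
    have hL2 : ((2*δ)^t * (n:ℝ)^(t+1))^t ≤ (∑ y : Fin t → Fin n, ((Cy y).card:ℝ))^t :=
      pow_le_pow_left₀ h2nn h2 t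
    have key2 : c * (n:ℝ)^(2*t) * (n:ℝ)^(t*t-t) ≤ (AllE.card:ℝ) * (n:ℝ)^(t*t-t) := by
      have e2 : ((n:ℝ)^t)^(t-1) = (n:ℝ)^(t*t-t) := by
        rw [← pow_mul]
        congr 1
        have h1 : t ≤ t * t := Nat.le_mul_of_pos_left _ ht
        have h2 : t * (t - 1) + t = t * t := by
          cases t with
          | zero => rfl
          | succ u => simp [Nat.succ_sub_one]; ring
        omega
      have e3 : ((2*δ)^t * (n:ℝ)^(t+1))^t = c * (n:ℝ)^(2*t) * (n:ℝ)^(t*t-t) := by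
        rw [mul_pow, ← pow_mul, ← pow_mul, hc, mul_assoc, ← pow_add]
        congr 2
        have h1 : t ≤ t * t := Nat.le_mul_of_pos_left _ ht
        have h2 : (t + 1) * t = t * t + t := by ring
        omega
      calc c * (n:ℝ)^(2*t) * (n:ℝ)^(t*t-t) = ((2*δ)^t * (n:ℝ)^(t+1))^t := e3.symm
        _ ≤ (∑ y : Fin t → Fin n, ((Cy y).card:ℝ))^t := hL2
        _ ≤ ((n:ℝ)^t)^(t-1) * (AllE.card:ℝ) := hpm2
        _ = (AllE.card:ℝ) * (n:ℝ)^(t*t-t) := by rw [e2]; ring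
    exact le_of_mul_le_mul_right key2 (by positivity)
  -- good tuples
  set P : ((Fin t ⊕ Fin t) → Fin n) → Prop := fun g => Function.Injective g ∧
    ∀ (i j : Fin t) (k : Fin t ⊕ Fin t),
      g k ∉ S {g (Sum.inl i), g (Sum.inr j)} with hP
  by_cases hG : (AllE.filter P).Nonempty
  · obtain ⟨g, hg⟩ := hG
    rw [Finset.mem_filter] at hg
    obtain ⟨hgA, hginj, hgclean⟩ := hg
    rw [hAllE, Finset.mem_filter] at hgA
    have hgE : ∀ i j : Fin t, ({g (Sum.inl i), g (Sum.inr j)} : Finset (Fin n)) ∈ F := by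
      intro i j
      have := hgA.2 i j
      rw [hN] at this
      simpa using this
    refine ⟨univ.image (fun i => g (Sum.inl i)), univ.image (fun j => g (Sum.inr j)),
      ?_, ?_, ?_, ?_⟩
    · rw [Finset.disjoint_left]
      rintro x hx hy
      obtain ⟨i, -, rfl⟩ := Finset.mem_image.mp hx
      obtain ⟨j, -, hij⟩ := Finset.mem_image.mp hy
      exact absurd (hginj hij) (by simp)
    · rw [Finset.card_image_of_injective _ (fun a b hab => Sum.inl_injective (hginj hab))]
      simp
    · rw [Finset.card_image_of_injective _ (fun a b hab => Sum.inr_injective (hginj hab))]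
      simp
    · intro x hx y hy
      obtain ⟨i, -, rfl⟩ := Finset.mem_image.mp hx
      obtain ⟨j, -, rfl⟩ := Finset.mem_image.mp hy
      refine ⟨hgE i j, ?_⟩
      rw [Finset.disjoint_left]
      intro z hz hzXY
      rw [Finset.mem_union] at hzXY
      rcases hzXY with hzX | hzY
      · obtain ⟨i', -, rfl⟩ := Finset.mem_image.mp hzX
        exact hgclean i j (Sum.inl i') hz
      · obtain ⟨j', -, rfl⟩ := Finset.mem_image.mp hzY
        exact hgclean i j (Sum.inr j') hz
  · -- no good tuple: contradiction via bad counting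
    exfalso
    set e : ℕ := t + t - 1 with he
    have hcardι : Fintype.card (Fin t ⊕ Fin t) = t + t := by simp
    set Bad1 : Finset ((Fin t ⊕ Fin t) → Fin n) :=
      univ.filter fun g => ∃ a b : Fin t ⊕ Fin t, a ≠ b ∧ g a = g b with hB1
    set Bad2 : Finset ((Fin t ⊕ Fin t) → Fin n) :=
      univ.filter fun g => ∃ (i j : Fin t) (k : Fin t ⊕ Fin t),
        ({g (Sum.inl i), g (Sum.inr j)} : Finset (Fin n)) ∈ F ∧
        k ≠ Sum.inl i ∧ k ≠ Sum.inr j ∧ g k ∈ S {g (Sum.inl i), g (Sum.inr j)} with hB2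
    have hsub : AllE ⊆ Bad1 ∪ Bad2 := by
      intro g hg
      have hnP : ¬ P g := fun hPg => hG ⟨g, Finset.mem_filter.mpr ⟨hg, hPg⟩⟩
      rw [hP] at hnP
      by_cases hinj : Function.Injective g
      · have hnc : ¬ ∀ (i j : Fin t) (k : Fin t ⊕ Fin t),
            g k ∉ S {g (Sum.inl i), g (Sum.inr j)} := fun h => hnP ⟨hinj, h⟩
        push_neg at hnc
        obtain ⟨i, j, k, hk⟩ := hnc
        have hgf : ({g (Sum.inl i), g (Sum.inr j)} : Finset (Fin n)) ∈ F := by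
          have hg' := hg
          rw [hAllE, Finset.mem_filter] at hg'
          have := hg'.2 i j
          rw [hN] at this
          simpa using this
        have hdisj := (hS _ hgf).2
        have hki : k ≠ Sum.inl i := by
          rintro rfl
          exact (Finset.disjoint_left.mp hdisj hk) (Finset.mem_insert_self _ _)
        have hkj : k ≠ Sum.inr j := by
          rintro rfl
          exact (Finset.disjoint_left.mp hdisj hk)
            (Finset.mem_insert.mpr (Or.inr (Finset.mem_singleton_self _)))
        exact Finset.mem_union.mpr (Or.inr (Finset.mem_filter.mpr
          ⟨mem_univ _, i, j, k, hgf, hki, hkj, hk⟩))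
      · obtain ⟨a, b, hab, hne⟩ := Function.not_injective_iff.mp hinj
        exact Finset.mem_union.mpr (Or.inl (Finset.mem_filter.mpr
          ⟨mem_univ _, a, b, hne, hab⟩))
    have hB1card : Bad1.card ≤ (t + t) * (t + t) * (1 * n ^ e) := by
      have hsub1 : Bad1 ⊆ univ.biUnion
          (fun p : (Fin t ⊕ Fin t) × (Fin t ⊕ Fin t) =>
            univ.filter fun g : (Fin t ⊕ Fin t) → Fin n =>
              g p.1 ∈ (if p.1 ≠ p.2 then ({g p.2} : Finset (Fin n)) else ∅)) := by
        intro g hg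
        rw [hB1, Finset.mem_filter] at hg
        obtain ⟨-, a, b, hne, heq⟩ := hg
        refine Finset.mem_biUnion.mpr ⟨(a, b), mem_univ _, Finset.mem_filter.mpr
          ⟨mem_univ _, ?_⟩⟩
        rw [if_pos hne]
        simpa using heq
      calc Bad1.card ≤ ∑ p : (Fin t ⊕ Fin t) × (Fin t ⊕ Fin t),
            (univ.filter fun g : (Fin t ⊕ Fin t) → Fin n =>
              g p.1 ∈ (if p.1 ≠ p.2 then ({g p.2} : Finset (Fin n)) else ∅)).card :=
          le_trans (Finset.card_le_card hsub1) (Finset.card_biUnion_le)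
        _ ≤ ∑ _p : (Fin t ⊕ Fin t) × (Fin t ⊕ Fin t), 1 * n ^ e := by
          apply Finset.sum_le_sum
          intro p _
          have := slot_bound (V := Fin n) p.1
            (fun g => if p.1 ≠ p.2 then ({g p.2} : Finset (Fin n)) else ∅) 1
            (fun g g' hgg' => by
              by_cases hp : p.1 ≠ p.2
              · rw [if_pos hp, if_pos hp, hgg' p.2 (Ne.symm hp)]
              · rw [if_neg hp, if_neg hp])
            (fun g => by split_ifs <;> simp)
          simpa [hcardι, he, Fintype.card_fin] using this
        _ = (t + t) * (t + t) * (1 * n ^ e) := by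
          rw [Finset.sum_const, smul_eq_mul, Finset.card_univ]
          simp [mul_comm, mul_assoc, mul_left_comm]
    have hB2card : Bad2.card ≤ t * t * (t + t) * (m * n ^ e) := by
      have hsub2 : Bad2 ⊆ univ.biUnion
          (fun w : Fin t × Fin t × (Fin t ⊕ Fin t) =>
            univ.filter fun g : (Fin t ⊕ Fin t) → Fin n =>
              g w.2.2 ∈ (if ({g (Sum.inl w.1), g (Sum.inr w.2.1)} : Finset (Fin n)) ∈ F ∧
                  w.2.2 ≠ Sum.inl w.1 ∧ w.2.2 ≠ Sum.inr w.2.1 then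
                S {g (Sum.inl w.1), g (Sum.inr w.2.1)} else ∅)) := by
        intro g hg
        rw [hB2, Finset.mem_filter] at hg
        obtain ⟨-, i, j, k, hgf, hki, hkj, hk⟩ := hg
        refine Finset.mem_biUnion.mpr ⟨(i, j, k), mem_univ _, Finset.mem_filter.mpr
          ⟨mem_univ _, ?_⟩⟩
        rw [if_pos ⟨hgf, hki, hkj⟩]
        exact hk
      calc Bad2.card ≤ ∑ w : Fin t × Fin t × (Fin t ⊕ Fin t),
            (univ.filter fun g : (Fin t ⊕ Fin t) → Fin n =>
              g w.2.2 ∈ (if ({g (Sum.inl w.1), g (Sum.inr w.2.1)} : Finset (Fin n)) ∈ F ∧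
                  w.2.2 ≠ Sum.inl w.1 ∧ w.2.2 ≠ Sum.inr w.2.1 then
                S {g (Sum.inl w.1), g (Sum.inr w.2.1)} else ∅)).card :=
          le_trans (Finset.card_le_card hsub2) (Finset.card_biUnion_le)
        _ ≤ ∑ _w : Fin t × Fin t × (Fin t ⊕ Fin t), m * n ^ e := by
          apply Finset.sum_le_sum
          intro w _
          have := slot_bound (V := Fin n) w.2.2
            (fun g => if ({g (Sum.inl w.1), g (Sum.inr w.2.1)} : Finset (Fin n)) ∈ F ∧
                  w.2.2 ≠ Sum.inl w.1 ∧ w.2.2 ≠ Sum.inr w.2.1 then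
                S {g (Sum.inl w.1), g (Sum.inr w.2.1)} else ∅) m
            (fun g g' hgg' => by
              by_cases hw : w.2.2 ≠ Sum.inl w.1 ∧ w.2.2 ≠ Sum.inr w.2.1
              · have e1 : g (Sum.inl w.1) = g' (Sum.inl w.1) := hgg' _ (Ne.symm hw.1)
                have e2 : g (Sum.inr w.2.1) = g' (Sum.inr w.2.1) := hgg' _ (Ne.symm hw.2)
                rw [e1, e2]
              · have hng : ¬(({g (Sum.inl w.1), g (Sum.inr w.2.1)} : Finset (Fin n)) ∈ F ∧
                    w.2.2 ≠ Sum.inl w.1 ∧ w.2.2 ≠ Sum.inr w.2.1) := fun h => hw ⟨h.2.1, h.2.2⟩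
                have hng' : ¬(({g' (Sum.inl w.1), g' (Sum.inr w.2.1)} : Finset (Fin n)) ∈ F ∧
                    w.2.2 ≠ Sum.inl w.1 ∧ w.2.2 ≠ Sum.inr w.2.1) := fun h => hw ⟨h.2.1, h.2.2⟩
                rw [if_neg hng, if_neg hng'])
            (fun g => by
              split_ifs with h
              · exact le_of_eq (hS _ h.1).1
              · simp)
          simpa [hcardι, he, Fintype.card_fin] using this
        _ = t * t * (t + t) * (m * n ^ e) := by
          rw [Finset.sum_const, smul_eq_mul, Finset.card_univ]
          simp [mul_comm, mul_assoc, mul_left_comm]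
    have hAllEcard : AllE.card ≤ K * n ^ e := by
      calc AllE.card ≤ (Bad1 ∪ Bad2).card := Finset.card_le_card hsub
        _ ≤ Bad1.card + Bad2.card := Finset.card_union_le _ _
        _ ≤ (t + t) * (t + t) * (1 * n ^ e) + t * t * (t + t) * (m * n ^ e) :=
          add_le_add hB1card hB2card
        _ = K * n ^ e := by rw [hK]; ring
    have hcast : (AllE.card : ℝ) ≤ (K : ℝ) * (n:ℝ) ^ e := by exact_mod_cast hAllEcard
    have hpow : (0:ℝ) < (n:ℝ) ^ e := by positivity
    have h2t : (n:ℝ) ^ (2 * t) = (n:ℝ) * (n:ℝ) ^ e := by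
      have h12 : 2 * t = 1 + e := by rw [he]; omega
      rw [h12, pow_add, pow_one]
    rw [h2t] at hA
    nlinarith [mul_lt_mul_of_pos_right hKc hpow]
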